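/- Let G be a finite simple graph, let k ≥ 3 be an integer, let β be an eigenvalue of the adjacency matrix of G, and let λ be a complex number with λ^k = β². Then λ is an eigenvalue of the k-power hypergraph G^(k). -/

import Mathlib

open Finset

/-- `(lam, x)` is an eigenpair of the `k`-uniform hypergraph with hyperedge set `E`:
`x` is nonzero and for every vertex `i`,
`lam * x i ^ (k-1) = ∑_{e ∈ E, i ∈ e} ∏_{v ∈ e \ {i}} x v`. -/
def IsHypergraphEigenpair {W : Type*} [Fintype W] [DecidableEq W]
    (k : ℕ) (E : Finset (Finset W)) (lam : ℂ) (x : W → ℂ) : Prop :=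
  x ≠ 0 ∧ ∀ i : W, lam * x i ^ (k - 1) =
    ∑ e ∈ E.filter (fun e => i ∈ e), ∏ v ∈ e.erase i, x v

/-- `lam` is an eigenvalue of the `k`-uniform hypergraph with hyperedge set `E`. -/
def IsHypergraphEigenvalue {W : Type*} [Fintype W] [DecidableEq W]
    (k : ℕ) (E : Finset (Finset W)) (lam : ℂ) : Prop :=
  ∃ x, IsHypergraphEigenpair k E lam x

/-- The hyperedge of the `k`-power hypergraph `G^(k)` corresponding to the edge `e` of `G`:
it consists of the two endpoints of `e` together with the `k - 2` added vertices on `e`. -/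
def powerEdge {V : Type*} [Fintype V] [DecidableEq V] (G : SimpleGraph V) [DecidableRel G.Adj]
    (k : ℕ) (e : G.edgeSet) : Finset (V ⊕ (G.edgeSet × Fin (k - 2))) :=
  Finset.univ.filter (fun v =>
    (∃ i, v = Sum.inl i ∧ i ∈ (e : Sym2 V)) ∨ ∃ t, v = Sum.inr (e, t))

/-- The hyperedge set of the `k`-power hypergraph `G^(k)`, whose vertices are the vertices of `G`
(`Sum.inl`) together with `k - 2` new vertices for each edge of `G` (`Sum.inr`). -/
def powerEdges {V : Type*} [Fintype V] [DecidableEq V] (G : SimpleGraph V) [DecidableRel G.Adj]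
    (k : ℕ) : Finset (Finset (V ⊕ (G.edgeSet × Fin (k - 2)))) :=
  Finset.univ.image (powerEdge G k)

/-! ### Auxiliary lemmas -/

section Aux

variable {V : Type*} [Fintype V] [DecidableEq V] (G : SimpleGraph V) [DecidableRel G.Adj] {k : ℕ}

lemma mem_powerEdge_inl {i : V} {e : G.edgeSet} :
    (Sum.inl i : V ⊕ (G.edgeSet × Fin (k - 2))) ∈ powerEdge G k e ↔ i ∈ (e : Sym2 V) := by
  simp [powerEdge]

lemma mem_powerEdge_inr {e' e : G.edgeSet} {t : Fin (k - 2)} :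
    (Sum.inr (e', t) : V ⊕ (G.edgeSet × Fin (k - 2))) ∈ powerEdge G k e ↔ e' = e := by
  constructor
  · intro h
    simp only [powerEdge, mem_filter, mem_univ, true_and] at h
    rcases h with ⟨i, hi, _⟩ | ⟨t', ht'⟩
    · exact absurd hi (by simp)
    · cases ht'; rfl
  · rintro rfl
    simp only [powerEdge, mem_filter, mem_univ, true_and]
    exact Or.inr ⟨t, rfl⟩

set_option linter.unusedSectionVars false in
lemma edge_endpoints (e : G.edgeSet) : ∃ a b, G.Adj a b ∧ (e : Sym2 V) = s(a, b) := by
  obtain ⟨s, hs⟩ := e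
  induction s using Sym2.ind with
  | _ a b => exact ⟨a, b, hs, rfl⟩

lemma powerEdge_eq {a b : V} (e : G.edgeSet) (he : (e : Sym2 V) = s(a, b)) :
    powerEdge G k e = insert (Sum.inl a) (insert (Sum.inl b)
      ((univ : Finset (Fin (k - 2))).image fun t => Sum.inr (e, t))) := by
  ext v
  cases v with
  | inl i =>
    simp [powerEdge, he, Sym2.mem_iff]
  | inr p =>
    obtain ⟨e', t⟩ := p
    simp only [mem_insert, mem_image, mem_univ, true_and]
    rw [mem_powerEdge_inr (G := G)]
    constructor
    · rintro rfl; exact Or.inr (Or.inr ⟨t, rfl⟩)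
    · rintro (h | h | ⟨t', ht'⟩)
      · exact absurd h (by simp)
      · exact absurd h (by simp)
      · cases ht'; rfl

lemma powerEdge_injective (hk : 3 ≤ k) : Function.Injective (powerEdge G k) := by
  intro e e' h
  have ht : (Sum.inr (e, ⟨0, by omega⟩) : V ⊕ (G.edgeSet × Fin (k - 2))) ∈ powerEdge G k e :=
    (mem_powerEdge_inr (G := G)).mpr rfl
  rw [h] at ht
  exact (mem_powerEdge_inr (G := G)).mp ht

lemma prod_powerEdge_erase_inl (x : V ⊕ (G.edgeSet × Fin (k - 2)) → ℂ) {a b : V} (hab : a ≠ b)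
    (e : G.edgeSet) (he : (e : Sym2 V) = s(a, b)) :
    ∏ v ∈ (powerEdge G k e).erase (Sum.inl a), x v
      = x (Sum.inl b) * ∏ t : Fin (k - 2), x (Sum.inr (e, t)) := by
  rw [powerEdge_eq G e he, Finset.erase_insert (by simp [hab]), Finset.prod_insert (by simp),
    Finset.prod_image (by intro u _ w _ h; simpa using h)]

lemma prod_powerEdge_erase_inr (x : V ⊕ (G.edgeSet × Fin (k - 2)) → ℂ) {a b : V} (hab : a ≠ b)
    (e : G.edgeSet) (he : (e : Sym2 V) = s(a, b)) (t0 : Fin (k - 2)) :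
    ∏ v ∈ (powerEdge G k e).erase (Sum.inr (e, t0)), x v
      = x (Sum.inl a) * (x (Sum.inl b) *
        ∏ t ∈ (univ : Finset (Fin (k - 2))).erase t0, x (Sum.inr (e, t))) := by
  have hinj : Function.Injective
      (fun t : Fin (k - 2) => (Sum.inr (e, t) : V ⊕ (G.edgeSet × Fin (k - 2)))) := by
    intro u w h; simpa using h
  rw [powerEdge_eq G e he, Finset.erase_insert_of_ne (by simp), Finset.erase_insert_of_ne (by simp),
    ← Finset.image_erase hinj, Finset.prod_insert (by simp [hab]), Finset.prod_insert (by simp),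
    Finset.prod_image (fun u _ w _ h => hinj h)]

lemma sum_powerEdges_filter (hk : 3 ≤ k) (w : V ⊕ (G.edgeSet × Fin (k - 2)))
    (f : Finset (V ⊕ (G.edgeSet × Fin (k - 2))) → ℂ) :
    ∑ h ∈ (powerEdges G k).filter (fun h => w ∈ h), f h
      = ∑ e ∈ (univ : Finset G.edgeSet).filter (fun e => w ∈ powerEdge G k e),
          f (powerEdge G k e) := by
  rw [Finset.sum_filter, Finset.sum_filter, powerEdges,
    Finset.sum_image (fun a _ b _ hh => powerEdge_injective G hk hh)]

lemma sum_incident' (i : V) (g : G.edgeSet → ℂ) (T : V → ℂ)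
    (hcompat : ∀ (j : V) (h : s(i, j) ∈ G.edgeSet), g ⟨s(i, j), h⟩ = T j) :
    ∑ e ∈ (univ : Finset G.edgeSet).filter (fun e : G.edgeSet => i ∈ (e : Sym2 V)), g e
      = ∑ j ∈ G.neighborFinset i, T j := by
  refine Finset.sum_bij' (fun e he => Sym2.Mem.other' (by simpa using he : i ∈ (e : Sym2 V)))
    (fun j hj => (⟨s(i, j), (G.mem_edgeSet).2 (by simpa using hj)⟩ : G.edgeSet)) ?_ ?_ ?_ ?_ ?_
  · intro e he
    have hi : i ∈ (e : Sym2 V) := by simpa using he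
    rw [SimpleGraph.mem_neighborFinset, ← SimpleGraph.mem_edgeSet, Sym2.other_spec' hi]
    exact e.2
  · intro j hj
    simp
  · intro e he
    have hi : i ∈ (e : Sym2 V) := by simpa using he
    exact Subtype.ext (Sym2.other_spec' hi)
  · intro j hj
    exact Sym2.congr_right.mp (Sym2.other_spec' _)
  · intro e he
    have hi : i ∈ (e : Sym2 V) := by simpa using he
    have hmem : s(i, Sym2.Mem.other' hi) ∈ G.edgeSet := by
      rw [Sym2.other_spec' hi]; exact e.2
    have hee : e = ⟨s(i, Sym2.Mem.other' hi), hmem⟩ := Subtype.ext (Sym2.other_spec' hi).symm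
    exact (congrArg g hee).trans (hcompat (Sym2.Mem.other' hi) hmem)

end Aux

lemma prod_ite_fin {m : ℕ} (hm : 1 ≤ m) (w z : ℂ) :
    (∏ t : Fin m, if (t : ℕ) = 0 then w else z) = w * z ^ (m - 1) := by
  have h0 : (⟨0, hm⟩ : Fin m) ∈ (univ : Finset (Fin m)) := mem_univ _
  rw [← Finset.mul_prod_erase univ _ h0]
  simp only [if_pos rfl]
  congr 1
  rw [Finset.prod_congr rfl (fun t ht => ?_), Finset.prod_const,
    Finset.card_erase_of_mem h0, Finset.card_univ, Fintype.card_fin]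
  have ht' : t ≠ ⟨0, hm⟩ := (Finset.mem_erase.mp ht).1
  rw [if_neg (fun h => ht' (Fin.ext h))]

lemma prod_ite_fin_erase {m : ℕ} (t0 : Fin m) (w z : ℂ) :
    (∏ t ∈ (univ : Finset (Fin m)).erase t0, if (t : ℕ) = 0 then w else z)
      = if (t0 : ℕ) = 0 then z ^ (m - 1) else w * z ^ (m - 2) := by
  have hm : 1 ≤ m := t0.pos
  have h0 : (⟨0, hm⟩ : Fin m) ∈ (univ : Finset (Fin m)) := mem_univ _
  by_cases h : (t0 : ℕ) = 0
  · rw [if_pos h]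
    rw [Finset.prod_congr rfl (fun t ht => ?_), Finset.prod_const,
      Finset.card_erase_of_mem (mem_univ _), Finset.card_univ, Fintype.card_fin]
    have ht' : t ≠ t0 := (Finset.mem_erase.mp ht).1
    rw [if_neg (fun hh => ht' (Fin.ext (hh.trans h.symm)))]
  · rw [if_neg h]
    have h0' : (⟨0, hm⟩ : Fin m) ∈ (univ : Finset (Fin m)).erase t0 := by
      rw [Finset.mem_erase]
      exact ⟨fun hh => h (by rw [← hh]), mem_univ _⟩
    rw [← Finset.mul_prod_erase _ _ h0']
    simp only [if_pos rfl]
    congr 1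
    have hc : ∀ t ∈ ((univ : Finset (Fin m)).erase t0).erase ⟨0, hm⟩,
        (if (t : ℕ) = 0 then w else z) = z := by
      intro t ht
      have ht1 : t ≠ (⟨0, hm⟩ : Fin m) := (Finset.mem_erase.mp ht).1
      rw [if_neg (fun hh => ht1 (Fin.ext hh))]
    rw [Finset.prod_congr rfl hc, Finset.prod_const,
      Finset.card_erase_of_mem h0', Finset.card_erase_of_mem (mem_univ _),
      Finset.card_univ, Fintype.card_fin]
    rw [Nat.sub_sub]

lemma term_identity (k : ℕ) (hk : 3 ≤ k) (lam β Xi Xj Zs yi yj : ℂ)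
    (hβ : β ≠ 0) (hXi : Xi ^ k = yi ^ 2) (hXj : Xj ^ k = yj ^ 2)
    (hZ : Zs ^ k = yi * yj / β) :
    Xj * (lam * Zs ^ 2 / (Xi * Xj) * Zs * Zs ^ (k - 2 - 1)) = lam * (yi * yj) / (β * Xi) := by
  by_cases hy : yi * yj = 0
  · have hZ0 : Zs = 0 := by
      have h0 : Zs ^ k = 0 := by rw [hZ, hy, zero_div]
      exact pow_eq_zero_iff (by omega : k ≠ 0) |>.mp h0
    rw [hZ0, hy]
    simp
  · have hyi : yi ≠ 0 := fun h => hy (by rw [h, zero_mul])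
    have hyj : yj ≠ 0 := fun h => hy (by rw [h, mul_zero])
    have hXi0 : Xi ≠ 0 := by
      intro h
      apply hyi
      have : yi ^ 2 = 0 := by rw [← hXi, h, zero_pow (by omega : k ≠ 0)]
      exact pow_eq_zero_iff (two_ne_zero) |>.mp this
    have hXj0 : Xj ≠ 0 := by
      intro h
      apply hyj
      have : yj ^ 2 = 0 := by rw [← hXj, h, zero_pow (by omega : k ≠ 0)]
      exact pow_eq_zero_iff (two_ne_zero) |>.mp this
    have hzk : Zs ^ 2 * Zs * Zs ^ (k - 2 - 1) = Zs ^ k := by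
      rw [← pow_succ, ← pow_add]
      congr 1
      omega
    calc Xj * (lam * Zs ^ 2 / (Xi * Xj) * Zs * Zs ^ (k - 2 - 1))
        = lam * (Zs ^ 2 * Zs * Zs ^ (k - 2 - 1)) * (Xj / (Xi * Xj)) := by ring
      _ = lam * Zs ^ k * (Xj / (Xi * Xj)) := by rw [hzk]
      _ = lam * (yi * yj / β) / Xi := by rw [hZ]; field_simp
      _ = lam * (yi * yj) / (β * Xi) := by ring

lemma inr_identity (k : ℕ) (hk : 3 ≤ k) (lam β Xa Xb Zs ya yb : ℂ) (hlam : lam ^ k = β ^ 2)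
    (hlam0 : lam ≠ 0) (hβ : β ≠ 0) (hXa : Xa ^ k = ya ^ 2) (hXb : Xb ^ k = yb ^ 2)
    (hZ : Zs ^ k = ya * yb / β) (t0v : ℕ) (ht0 : t0v < k - 2) :
    lam * (if t0v = 0 then lam * Zs ^ 2 / (Xa * Xb) * Zs else Zs) ^ (k - 1)
      = Xa * (Xb * (if t0v = 0 then Zs ^ (k - 2 - 1)
          else lam * Zs ^ 2 / (Xa * Xb) * Zs * Zs ^ (k - 2 - 2))) := by
  have hk0 : k ≠ 0 := by omega
  have hk10 : k - 1 ≠ 0 := by omega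
  by_cases hy : ya * yb = 0
  · have hZ0 : Zs = 0 := by
      have h0 : Zs ^ k = 0 := by rw [hZ, hy, zero_div]
      exact pow_eq_zero_iff hk0 |>.mp h0
    have hXab : Xa * Xb = 0 := by
      rcases mul_eq_zero.mp hy with h | h
      · have : Xa = 0 := by
          have h2 : Xa ^ k = 0 := by rw [hXa, h]; ring
          exact pow_eq_zero_iff hk0 |>.mp h2
        rw [this, zero_mul]
      · have : Xb = 0 := by
          have h2 : Xb ^ k = 0 := by rw [hXb, h]; ring
          exact pow_eq_zero_iff hk0 |>.mp h2
        rw [this, mul_zero]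
    by_cases ht : t0v = 0
    · rw [if_pos ht, if_pos ht, hZ0]
      rw [mul_zero, zero_pow hk10, mul_zero]
      have : Xa * (Xb * (0:ℂ) ^ (k - 2 - 1)) = Xa * Xb * (0:ℂ) ^ (k - 2 - 1) := by ring
      rw [this, hXab, zero_mul]
    · rw [if_neg ht, if_neg ht, hZ0]
      rw [zero_pow hk10, mul_zero]
      have : Xa * (Xb * (lam * (0:ℂ) ^ 2 / (Xa * Xb) * 0 * (0:ℂ) ^ (k - 2 - 2))) = 0 := by
        ring
      rw [this]
  · have hya : ya ≠ 0 := fun h => hy (by rw [h, zero_mul])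
    have hyb : yb ≠ 0 := fun h => hy (by rw [h, mul_zero])
    have hXa0 : Xa ≠ 0 := by
      intro h; apply hya
      have : ya ^ 2 = 0 := by rw [← hXa, h, zero_pow hk0]
      exact pow_eq_zero_iff two_ne_zero |>.mp this
    have hXb0 : Xb ≠ 0 := by
      intro h; apply hyb
      have : yb ^ 2 = 0 := by rw [← hXb, h, zero_pow hk0]
      exact pow_eq_zero_iff two_ne_zero |>.mp this
    have hZs0 : Zs ≠ 0 := by
      intro h
      have : Zs ^ k = 0 := by rw [h, zero_pow hk0]
      rw [hZ, div_eq_zero_iff] at this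
      exact hy (this.resolve_right hβ)
    set Om : ℂ := lam * Zs ^ 2 / (Xa * Xb) with hOm
    have hOm0 : Om ≠ 0 := by
      rw [hOm]
      exact div_ne_zero (mul_ne_zero hlam0 (pow_ne_zero 2 hZs0)) (mul_ne_zero hXa0 hXb0)
    have hOmXab : Om * (Xa * Xb) = lam * Zs ^ 2 := by
      rw [hOm]; field_simp
    have hOmk : Om ^ k = 1 := by
      rw [hOm, div_pow, mul_pow, hlam, ← pow_mul, mul_comm 2 k, pow_mul, hZ, mul_pow, hXa, hXb]
      field_simp
    by_cases ht : t0v = 0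
    · rw [if_pos ht, if_pos ht]
      apply mul_left_cancel₀ (mul_ne_zero hOm0 (pow_ne_zero 2 hZs0))
      rw [mul_pow]
      calc Om * Zs ^ 2 * (lam * (Om ^ (k - 1) * Zs ^ (k - 1)))
          = lam * (Om ^ (k - 1) * Om) * (Zs ^ (k - 1) * Zs ^ 2) := by ring
        _ = lam * Om ^ k * Zs ^ (k + 1) := by
            have e1 : k - 1 + 1 = k := by omega
            have e2 : k - 1 + 2 = k + 1 := by omega
            rw [← pow_succ, ← pow_add, e1, e2]
        _ = lam * Zs ^ (k + 1) := by rw [hOmk, mul_one]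
        _ = lam * Zs ^ 2 * (Zs ^ 2 * Zs ^ (k - 2 - 1)) := by
            have e3 : 2 + (2 + (k - 2 - 1)) = k + 1 := by omega
            rw [mul_assoc, ← pow_add, ← pow_add, e3]
        _ = Om * (Xa * Xb) * (Zs ^ 2 * Zs ^ (k - 2 - 1)) := by rw [hOmXab]
        _ = Om * Zs ^ 2 * (Xa * (Xb * Zs ^ (k - 2 - 1))) := by ring
    · rw [if_neg ht, if_neg ht]
      have hk4 : 4 ≤ k := by omega
      have hp : Zs ^ 2 * Zs ^ (k - 2 - 2) * Zs = Zs ^ (k - 1) := by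
        rw [← pow_add, ← pow_succ]
        congr 1
        omega
      calc lam * Zs ^ (k - 1) = lam * (Zs ^ 2 * Zs ^ (k - 2 - 2) * Zs) := by rw [hp]
        _ = Om * (Xa * Xb) * Zs ^ (k - 2 - 2) * Zs := by
            rw [hOmXab]; ring
        _ = Xa * (Xb * (Om * Zs * Zs ^ (k - 2 - 2))) := by ring
        _ = Xa * (Xb * (lam * Zs ^ 2 / (Xa * Xb) * Zs * Zs ^ (k - 2 - 2))) := by rw [← hOm]

/-- **(Zhou et al.)** If `β` is an eigenvalue of the adjacency matrix of `G` and `lam^k = β²`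
with `k ≥ 3`, then `lam` is an eigenvalue of the k-power hypergraph `G^(k)`. -/
theorem eigenvalue_of_graph_eigenvalue
    {V : Type*} [Fintype V] [DecidableEq V] (G : SimpleGraph V) [DecidableRel G.Adj]
    (k : ℕ) (hk : 3 ≤ k) (β lam : ℂ)
    (hβ : ∃ y : V → ℂ, y ≠ 0 ∧ (G.adjMatrix ℂ).mulVec y = β • y)
    (hlam : lam ^ k = β ^ 2) :
    IsHypergraphEigenvalue k (powerEdges G k) lam := by
  obtain ⟨y, hy0, hyeig⟩ := hβ
  have heig : ∀ i : V, ∑ j ∈ G.neighborFinset i, y j = β * y i := by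
    intro i
    have h := congrFun hyeig i
    rwa [SimpleGraph.adjMatrix_mulVec_apply, Pi.smul_apply, smul_eq_mul] at h
  have hk1 : 1 ≤ k - 2 := by omega
  have hk0 : k ≠ 0 := by omega
  by_cases hlam0 : lam = 0
  · -- degenerate case `lam = 0`
    by_cases hE : Nonempty G.edgeSet
    · obtain ⟨e0⟩ := hE
      refine ⟨Sum.elim 0 1, fun h => ?_, fun i => ?_⟩
      · have h1 := congrFun h (Sum.inr (e0, ⟨0, by omega⟩))
        simp at h1
      · rw [hlam0, zero_mul]
        symm
        apply Finset.sum_eq_zero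
        intro h hh
        rw [Finset.mem_filter, powerEdges, Finset.mem_image] at hh
        obtain ⟨⟨e, -, rfl⟩, hih⟩ := hh
        obtain ⟨a, b, hab, he⟩ := edge_endpoints G e
        have ha : (Sum.inl a : V ⊕ (G.edgeSet × Fin (k - 2))) ∈ powerEdge G k e := by
          rw [mem_powerEdge_inl (G := G), he]
          simp
        have hb : (Sum.inl b : V ⊕ (G.edgeSet × Fin (k - 2))) ∈ powerEdge G k e := by
          rw [mem_powerEdge_inl (G := G), he]
          simp
        rcases eq_or_ne i (Sum.inl a) with rfl | hia
        · refine Finset.prod_eq_zero (Finset.mem_erase.mpr ⟨?_, hb⟩) rfl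
          simpa using hab.ne'
        · exact Finset.prod_eq_zero (Finset.mem_erase.mpr ⟨hia.symm, ha⟩) rfl
    · have hempty : IsEmpty G.edgeSet := not_nonempty_iff.mp hE
      refine ⟨Sum.elim y 0,
        fun h => hy0 (funext fun i => by simpa using congrFun h (Sum.inl i)), fun i => ?_⟩
      have hPE : powerEdges G k = ∅ := by
        rw [powerEdges, Finset.univ_eq_empty, Finset.image_empty]
      rw [hPE, Finset.filter_empty, Finset.sum_empty, hlam0, zero_mul]
  · -- main case `lam ≠ 0`
    have hβ0 : β ≠ 0 := by
      intro h
      apply hlam0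
      have h2 : lam ^ k = 0 := by rw [hlam, h]; ring
      exact pow_eq_zero_iff hk0 |>.mp h2
    have hex : ∀ z : ℂ, ∃ w : ℂ, w ^ k = z := fun z =>
      IsAlgClosed.exists_pow_nat_eq z (by omega)
    choose X hX using fun i : V => hex (y i ^ 2)
    choose Z hZ using fun s : Sym2 V =>
      hex (Sym2.lift ⟨fun a b => y a * y b, fun a b => mul_comm _ _⟩ s / β)
    have hZab : ∀ a b : V, Z s(a, b) ^ k = y a * y b / β := by
      intro a b
      have h := hZ s(a, b)
      rwa [Sym2.lift_mk] at h
    obtain ⟨Om, hOm⟩ :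
        ∃ Om : Sym2 V → ℂ, ∀ a b : V, Om s(a, b) = lam * Z s(a, b) ^ 2 / (X a * X b) :=
      ⟨fun s => lam * Z s ^ 2 / Sym2.lift ⟨fun a b => X a * X b, fun a b => mul_comm _ _⟩ s,
        fun a b => by simp only [Sym2.lift_mk]⟩
    set x : V ⊕ (G.edgeSet × Fin (k - 2)) → ℂ :=
      Sum.elim X (fun p => if (p.2 : ℕ) = 0
        then Om (p.1 : Sym2 V) * Z (p.1 : Sym2 V) else Z (p.1 : Sym2 V)) with hxdef
    have hxinl : ∀ i : V, x (Sum.inl i) = X i := fun _ => rfl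
    have hxinr : ∀ (e : G.edgeSet) (t : Fin (k - 2)),
        x (Sum.inr (e, t)) = if (t : ℕ) = 0
          then Om (e : Sym2 V) * Z (e : Sym2 V) else Z (e : Sym2 V) := fun _ _ => rfl
    have hXzero : ∀ a : V, y a = 0 → X a = 0 := by
      intro a h
      have h2 : X a ^ k = 0 := by rw [hX, h]; ring
      exact pow_eq_zero_iff hk0 |>.mp h2
    have hXne : ∀ a : V, y a ≠ 0 → X a ≠ 0 := by
      intro a hya h
      apply hya
      have h2 : y a ^ 2 = 0 := by rw [← hX a, h, zero_pow hk0]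
      exact pow_eq_zero_iff two_ne_zero |>.mp h2
    refine ⟨x, ?_, ?_⟩
    · obtain ⟨i, hi⟩ := Function.ne_iff.mp hy0
      have hyi : y i ≠ 0 := by simpa using hi
      intro h
      have h2 := congrFun h (Sum.inl i)
      rw [hxinl] at h2
      simp only [Pi.zero_apply] at h2
      exact hXne i hyi h2
    · intro w
      cases w with
      | inl i =>
        rw [sum_powerEdges_filter G hk]
        have hfil : ((univ : Finset G.edgeSet).filter
              (fun e => (Sum.inl i : V ⊕ (G.edgeSet × Fin (k - 2))) ∈ powerEdge G k e))
            = (univ : Finset G.edgeSet).filter (fun e : G.edgeSet => i ∈ (e : Sym2 V)) :=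
          Finset.filter_congr (fun e _ => by rw [mem_powerEdge_inl (G := G)])
        rw [hfil]
        have hcomp : ∀ (j : V) (hmem : s(i, j) ∈ G.edgeSet),
            (∏ v ∈ (powerEdge G k (⟨s(i, j), hmem⟩ : G.edgeSet)).erase (Sum.inl i), x v)
              = lam * (y i * y j) / (β * X i) := by
          intro j hmem
          have hadj : G.Adj i j := G.mem_edgeSet.mp hmem
          have hne : i ≠ j := G.ne_of_adj hadj
          rw [prod_powerEdge_erase_inl G x hne ⟨s(i, j), hmem⟩ rfl, hxinl]
          have hprod : (∏ t : Fin (k - 2), x (Sum.inr ((⟨s(i, j), hmem⟩ : G.edgeSet), t)))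
              = Om s(i, j) * Z s(i, j) * Z s(i, j) ^ (k - 2 - 1) := by
            simp only [hxinr]
            exact prod_ite_fin hk1 _ _
          rw [hprod, hOm]
          exact term_identity k hk lam β (X i) (X j) (Z s(i, j)) (y i) (y j) hβ0
            (hX i) (hX j) (hZab i j)
        rw [sum_incident' G i
          (fun e => ∏ v ∈ (powerEdge G k e).erase (Sum.inl i), x v)
          (fun j => lam * (y i * y j) / (β * X i)) hcomp, hxinl]
        by_cases hyi : y i = 0
        · rw [hXzero i hyi, zero_pow (by omega : k - 1 ≠ 0), mul_zero]
          symm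
          apply Finset.sum_eq_zero
          intro j _
          rw [hyi]
          simp
        · have hXi0 : X i ≠ 0 := hXne i hyi
          have hsum : (∑ j ∈ G.neighborFinset i, lam * (y i * y j) / (β * X i))
              = (∑ j ∈ G.neighborFinset i, y j) * (lam * y i / (β * X i)) := by
            rw [Finset.sum_mul]
            apply Finset.sum_congr rfl
            intro j _
            ring
          rw [hsum, heig i]
          have hpow : X i ^ (k - 1) * X i = y i ^ 2 := by
            rw [← pow_succ, show k - 1 + 1 = k by omega, hX i]
          field_simp
          linear_combination hpow
      | inr p =>
        obtain ⟨e, t0⟩ := p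
        obtain ⟨a, b, hab, he⟩ := edge_endpoints G e
        rw [sum_powerEdges_filter G hk]
        have hfil : ((univ : Finset G.edgeSet).filter
              (fun e' => (Sum.inr (e, t0) : V ⊕ (G.edgeSet × Fin (k - 2))) ∈ powerEdge G k e'))
            = {e} := by
          have h1 : ∀ e' ∈ (univ : Finset G.edgeSet),
              ((Sum.inr (e, t0) : V ⊕ (G.edgeSet × Fin (k - 2))) ∈ powerEdge G k e') ↔ (e = e') :=
            fun e' _ => mem_powerEdge_inr (G := G)
          rw [Finset.filter_congr h1, Finset.filter_eq]
          simp
        rw [hfil, Finset.sum_singleton,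
          prod_powerEdge_erase_inr G x (G.ne_of_adj hab) e he t0, hxinl, hxinl, hxinr]
        have hprod : (∏ t ∈ (univ : Finset (Fin (k - 2))).erase t0, x (Sum.inr (e, t)))
            = if (t0 : ℕ) = 0 then Z (e : Sym2 V) ^ (k - 2 - 1)
              else Om (e : Sym2 V) * Z (e : Sym2 V) * Z (e : Sym2 V) ^ (k - 2 - 2) := by
          simp only [hxinr]
          exact prod_ite_fin_erase t0 _ _
        rw [hprod, he, hOm a b]
        exact inr_identity k hk lam β (X a) (X b) (Z s(a, b)) (y a) (y b) hlam hlam0 hβ0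
          (hX a) (hX b) (hZab a b) (t0 : ℕ) t0.2
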